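/- Sturm nonvanishing consequence: suppose u > 0 solves u'' + ((n−1)/r)u' + f(u) = 0 on (0,1) with u(1) = 0, f is C¹ with f > 0 and u·f'(u) > f(u) for all u > 0, and w solves the linearized equation w'' + ((n−1)/r)w' + f'(u)w = 0 on (0,1) with w'(0) = w(1) = 0, w not identically zero. If w > 0 on [0,1), then a contradiction follows; hence the linearized problem has only the trivial solution whenever every nontrivial solution of the linearized problem is known to be positive on [0,1). -/

import Mathlib

/-- Sturm comparison consequence: if `u > 0` solves `u'' + ((n-1)/r) u' + f(u) = 0` on
`(0,1)` with `u(1) = 0`, where `f > 0` and `u f'(u) > f(u)` for `u > 0`, then any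
solution `w` of the linearized equation with `w'(0) = 0`, `w(0) > 0`, `w(1) = 0`
must vanish somewhere in `(0,1)`. -/
theorem stmt14 (n : ℕ) (hn : 1 ≤ n) (f f' : ℝ → ℝ)
    (hf : ∀ x > (0:ℝ), HasDerivAt f (f' x) x ∧ 0 < f x ∧ f x < x * f' x)
    (u u' u'' : ℝ → ℝ)
    (hu : ∀ r ∈ Set.Icc (0:ℝ) 1, HasDerivAt u (u' r) r)
    (hu' : ∀ r ∈ Set.Icc (0:ℝ) 1, HasDerivAt u' (u'' r) r)
    (hupos : ∀ r ∈ Set.Ico (0:ℝ) 1, 0 < u r)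
    (hueq : ∀ r ∈ Set.Ioo (0:ℝ) 1, u'' r + ((n : ℝ) - 1) / r * u' r + f (u r) = 0)
    (hu'0 : u' 0 = 0) (hu1 : u 1 = 0)
    (w w' w'' : ℝ → ℝ)
    (hwd : ∀ r ∈ Set.Icc (0:ℝ) 1, HasDerivAt w (w' r) r)
    (hwd' : ∀ r ∈ Set.Icc (0:ℝ) 1, HasDerivAt w' (w'' r) r)
    (hweq : ∀ r ∈ Set.Ioo (0:ℝ) 1,
      w'' r + ((n : ℝ) - 1) / r * w' r + f' (u r) * w r = 0)
    (hw'0 : w' 0 = 0) (hw1 : w 1 = 0) (hw0 : 0 < w 0) :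
    ∃ ρ ∈ Set.Ioo (0:ℝ) 1, w ρ = 0 := by
  by_contra hcon
  push_neg at hcon
  -- w is continuous on [0,1]
  have hwc : ContinuousOn w (Set.Icc (0:ℝ) 1) := fun r hr =>
    (hwd r hr).continuousAt.continuousWithinAt
  -- w > 0 on (0,1)
  have hwpos : ∀ r ∈ Set.Ioo (0:ℝ) 1, 0 < w r := by
    intro r hr
    rcases lt_trichotomy (w r) 0 with h | h | h
    · -- IVT gives a zero in (0, r)
      exfalso
      have hsub : Set.Icc (0:ℝ) r ⊆ Set.Icc 0 1 :=
        Set.Icc_subset_Icc le_rfl hr.2.le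
      have := intermediate_value_Ioo' (le_of_lt hr.1) (hwc.mono hsub)
      have h0 : (0:ℝ) ∈ Set.Ioo (w r) (w 0) := ⟨h, hw0⟩
      obtain ⟨c, hc, hc0⟩ := this h0
      exact hcon c ⟨hc.1, hc.2.trans hr.2⟩ hc0
    · exact absurd h (hcon r hr)
    · exact h
  -- Wronskian
  set W : ℝ → ℝ := fun r => r ^ (n - 1) * (u' r * w r - u r * w' r) with hW
  have hWderiv : ∀ r ∈ Set.Ioo (0:ℝ) 1,
      HasDerivAt W (r ^ (n - 1) * w r * (u r * f' (u r) - f (u r))) r := by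
    intro r hr
    have hr' : r ∈ Set.Icc (0:ℝ) 1 := ⟨hr.1.le, hr.2.le⟩
    have hrne : r ≠ 0 := ne_of_gt hr.1
    have hP : HasDerivAt (fun x : ℝ => x ^ (n - 1)) (((n : ℝ) - 1) / r * r ^ (n - 1)) r := by
      have := hasDerivAt_pow (n - 1) r
      convert this using 1
      · rfl
      rcases Nat.exists_eq_add_of_le hn with ⟨m, rfl⟩
      cases m with
      | zero => simp
      | succ k =>
        have : (1 + (k+1) - 1 : ℕ) = k + 1 := by omega
        rw [this]
        push_cast
        rw [pow_succ]
        field_simp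
        ring
    have hQ : HasDerivAt (fun x => u' x * w x - u x * w' x)
        (u'' r * w r + u' r * w' r - (u' r * w' r + u r * w'' r)) r :=
      ((hu' r hr').mul (hwd r hr')).sub ((hu r hr').mul (hwd' r hr'))
    have hprod := hP.mul hQ
    convert hprod using 1
    · rfl
    · rfl
    · rfl
    have e1 : u'' r = -(((n : ℝ) - 1) / r * u' r + f (u r)) := by
      have := hueq r hr; linarith
    have e2 : w'' r = -(((n : ℝ) - 1) / r * w' r + f' (u r) * w r) := by
      have := hweq r hr; linarith
    rw [e1, e2]; ring
  have hWderivpos : ∀ r ∈ Set.Ioo (0:ℝ) 1, 0 < deriv W r := by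
    intro r hr
    rw [(hWderiv r hr).deriv]
    have h1 : (0:ℝ) < r ^ (n - 1) := pow_pos hr.1 _
    have h2 := hwpos r hr
    have h3 : 0 < u r * f' (u r) - f (u r) := by
      have hu0 := hupos r ⟨hr.1.le, hr.2⟩
      have := (hf (u r) hu0).2.2
      linarith
    positivity
  have hWcont : ContinuousOn W (Set.Icc (0:ℝ) 1) := by
    intro r hr
    exact (((continuousAt_pow r (n-1)).mul
      (((hu' r hr).continuousAt.mul (hwd r hr).continuousAt).sub
        ((hu r hr).continuousAt.mul (hwd' r hr).continuousAt)))).continuousWithinAt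
  have hmono : StrictMonoOn W (Set.Icc (0:ℝ) 1) := by
    apply strictMonoOn_of_deriv_pos (convex_Icc 0 1) hWcont
    intro r hr
    rw [interior_Icc] at hr
    exact hWderivpos r hr
  have h01 : W 0 < W 1 := hmono (Set.left_mem_Icc.2 zero_le_one)
    (Set.right_mem_Icc.2 zero_le_one) zero_lt_one
  have hW0 : W 0 = 0 := by simp [hW, hu'0, hw'0]
  have hW1 : W 1 = 0 := by simp [hW, hu1, hw1]
  rw [hW0, hW1] at h01
  exact lt_irrefl 0 h01
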